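/- Assume Hypotheses 1, 2 and 3. Then there is at most one monotone solution of the optimal-stopping master equation. -/

import Mathlib

open scoped RealInnerProductSpace
noncomputable section

/-- `ℝ^d` with the Euclidean inner product. -/
abbrev Euc (d : ℕ) := EuclideanSpace ℝ (Fin d)

/-- The positive orthant `O_d = (ℝ≥0)^d`. -/
def Od (d : ℕ) : Set (Euc d) := {x | ∀ i, 0 ≤ x i}

/-- `B_R = {x ∈ O_d : x_1 + ... + x_d ≤ R}`. -/
def Ball1 (d : ℕ) (R : ℝ) : Set (Euc d) := {x | x ∈ Od d ∧ ∑ i, x i ≤ R}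

/-- Monotone solution of the master equation for the MFG of optimal stopping (Definition 3.1):
`U ≤ 0` componentwise, and the monotone-solution inequality holds for all test vectors
`V ≤ 0`, with threshold `R₁ ≥ R₀` where `R₀` is the constant of Hypothesis 2. -/
def IsMonotoneSolOS (d : ℕ) (F G : Euc d → Euc d → Euc d) (r lam : ℝ)
    (T : Euc d →L[ℝ] Euc d) (R₀ : ℝ) (U : Euc d → Euc d) : Prop :=
  ContinuousOn U (Od d) ∧
  (∀ x ∈ Od d, ∀ i, U x i ≤ 0) ∧
  ∃ R₁ ≥ R₀, ∀ R ≥ R₁, ∀ V : Euc d, (∀ i, V i ≤ 0) → ∀ y ∈ Od d, ∀ x₀ ∈ Ball1 d R,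
    (∀ x ∈ Ball1 d R, x ≠ x₀ → ⟪U x₀ - V, x₀ - y⟫ < ⟪U x - V, x - y⟫) →
    ⟪G x₀ (U x₀), x₀ - y⟫ + ⟪F x₀ (U x₀), U x₀ - V⟫ ≤
      r * ⟪U x₀, x₀ - y⟫
        + lam * ⟪U x₀ - ContinuousLinearMap.adjoint T (U (T x₀)), x₀ - y⟫


open MeasureTheory
set_option maxHeartbeats 1000000

lemma stegall {ι : Type*} [Fintype ι] [DecidableEq ι]
    (C : Set (EuclideanSpace ℝ ι)) (hC : IsCompact C) (hne : C.Nonempty)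
    (f : EuclideanSpace ℝ ι → ℝ) (hf : ContinuousOn f C) {ε : ℝ} (hε : 0 < ε) :
    ∃ c : EuclideanSpace ℝ ι, ‖c‖ < ε ∧ ∃ z₀ ∈ C, ∀ z ∈ C, z ≠ z₀ →
      f z₀ + ⟪c, z₀⟫ < f z + ⟪c, z⟫ := by
  classical
  obtain ⟨M₀, hM₀⟩ := hC.isBounded.exists_norm_le
  set M : ℝ := max M₀ 0 with hMdef
  have hM : ∀ z ∈ C, ‖z‖ ≤ M := fun z hz => (hM₀ z hz).trans (le_max_left _ _)
  have hMnn : 0 ≤ M := le_max_right _ _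
  have hcont : ∀ c : EuclideanSpace ℝ ι, ContinuousOn (fun z => f z + ⟪c, z⟫) C :=
    fun c => hf.add (Continuous.continuousOn (continuous_const.inner continuous_id))
  have H : ∀ c : EuclideanSpace ℝ ι, ∃ z ∈ C, IsMinOn (fun z => f z + ⟪c, z⟫) C z :=
    fun c => hC.exists_isMinOn hne (hcont c)
  choose w hwC hwmin using H
  set m : EuclideanSpace ℝ ι → ℝ := fun c => f (w c) + ⟪c, w c⟫ with hmdef
  have hm_le : ∀ c z, z ∈ C → m c ≤ f z + ⟪c, z⟫ := fun c z hz => hwmin c hz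
  have key : ∀ c c', m c ≤ m c' + M * ‖c - c'‖ := by
    intro c c'
    have h1 : m c ≤ f (w c') + ⟪c, w c'⟫ := hm_le c _ (hwC c')
    have h2 : ⟪c, w c'⟫ = ⟪c', w c'⟫ + ⟪c - c', w c'⟫ := by
      rw [inner_sub_left]; ring
    have h3 : ⟪c - c', w c'⟫ ≤ M * ‖c - c'‖ := by
      calc ⟪c - c', w c'⟫ ≤ ‖c - c'‖ * ‖w c'‖ := real_inner_le_norm _ _
        _ ≤ ‖c - c'‖ * M := by
            exact mul_le_mul_of_nonneg_left (hM _ (hwC c')) (norm_nonneg _)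
        _ = M * ‖c - c'‖ := mul_comm _ _
    calc m c ≤ f (w c') + ⟪c, w c'⟫ := h1
      _ = m c' + ⟪c - c', w c'⟫ := by rw [h2]; simp [hmdef]; ring
      _ ≤ m c' + M * ‖c - c'‖ := by linarith
  have hlip : LipschitzWith M.toNNReal m := by
    apply LipschitzWith.of_dist_le_mul
    intro c c'
    rw [Real.dist_eq, dist_eq_norm]
    have := key c c'
    have h2 := key c' c
    rw [norm_sub_rev c' c] at h2
    rw [abs_le]
    constructor
    · simp only [Real.coe_toNNReal _ hMnn]; linarith
    · simp only [Real.coe_toNNReal _ hMnn]; linarith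
  have hae : ∀ᵐ c ∂(volume : Measure (EuclideanSpace ℝ ι)), DifferentiableAt ℝ m c :=
    hlip.ae_differentiableAt
  have hball : (Metric.ball (0 : EuclideanSpace ℝ ι) ε ∩ {c | DifferentiableAt ℝ m c}).Nonempty := by
    by_contra h
    rw [Set.not_nonempty_iff_eq_empty] at h
    have hsub : Metric.ball (0 : EuclideanSpace ℝ ι) ε ⊆ {c | ¬ DifferentiableAt ℝ m c} := by
      intro c hc hd
      exact Set.eq_empty_iff_forall_notMem.1 h c ⟨hc, hd⟩
    have h0 : volume (Metric.ball (0 : EuclideanSpace ℝ ι) ε) = 0 := by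
      refine measure_mono_null hsub ?_
      rw [ae_iff] at hae; exact hae
    exact absurd h0 (Metric.measure_ball_pos volume 0 hε).ne'
  obtain ⟨c, hcball, hcdiff⟩ := hball
  refine ⟨c, by simpa using hcball, w c, hwC c, ?_⟩
  intro z hz hzne
  by_contra hle
  push_neg at hle
  -- z is also a minimizer
  have hzmin : f z + ⟪c, z⟫ = m c := le_antisymm hle (hm_le c z hz)
  -- any minimizer z₁ gives fderiv m c = innerSL ℝ z₁
  have grad : ∀ z₁, z₁ ∈ C → f z₁ + ⟪c, z₁⟫ = m c →
      (fderiv ℝ m c : EuclideanSpace ℝ ι →L[ℝ] ℝ) = innerSL ℝ z₁ := by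
    intro z₁ hz₁ hmin₁
    set h : EuclideanSpace ℝ ι → ℝ := fun c' => (m c - ⟪z₁, c⟫) + ⟪z₁, c'⟫ - m c' with hhdef
    have hnn : ∀ c', 0 ≤ h c' := by
      intro c'
      have h1 : m c' ≤ f z₁ + ⟪c', z₁⟫ := hm_le c' z₁ hz₁
      have h2 : f z₁ + ⟪c', z₁⟫ = m c + ⟪z₁, c'⟫ - ⟪z₁, c⟫ := by
        rw [← hmin₁, real_inner_comm c' z₁, real_inner_comm z₁ c]; ring
      simp only [hhdef]; linarith [h2 ▸ h1]
    have hc0 : h c = 0 := by simp [hhdef]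
    have hloc : IsLocalMin h c := Filter.Eventually.of_forall (fun y => by rw [hc0]; exact hnn y)
    have hder : HasFDerivAt h ((innerSL ℝ z₁) - fderiv ℝ m c) c := by
      have h1 : HasFDerivAt (fun c' : EuclideanSpace ℝ ι => (m c - ⟪z₁, c⟫) + ⟪z₁, c'⟫)
          (innerSL ℝ z₁) c := ((innerSL ℝ z₁).hasFDerivAt).const_add _
      exact h1.sub hcdiff.hasFDerivAt
    have := hloc.hasFDerivAt_eq_zero hder
    have : (innerSL ℝ z₁ : EuclideanSpace ℝ ι →L[ℝ] ℝ) = fderiv ℝ m c := by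
      rwa [sub_eq_zero] at this
    exact this.symm
  have e1 := grad (w c) (hwC c) rfl
  have e2 := grad z hz hzmin
  apply hzne
  have : (innerSL ℝ z : EuclideanSpace ℝ ι →L[ℝ] ℝ) = innerSL ℝ (w c) := by rw [← e1, ← e2]
  apply ext_inner_left ℝ
  intro v
  have := congrFun (congrArg (fun L : EuclideanSpace ℝ ι →L[ℝ] ℝ => (L : EuclideanSpace ℝ ι → ℝ)) this) v
  rw [real_inner_comm z v, real_inner_comm (w c) v]
  simpa [innerSL_apply_apply] using this


lemma einner {ι : Type*} [Fintype ι] (x y : EuclideanSpace ℝ ι) :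
    ⟪x, y⟫ = ∑ i, x i * y i := by
  rw [PiLp.inner_apply]; simp [RCLike.inner_apply]; exact Finset.sum_congr rfl fun i _ => mul_comm _ _

lemma euc_abs_le_norm {ι : Type*} [Fintype ι] (x : EuclideanSpace ℝ ι) (i : ι) :
    |x i| ≤ ‖x‖ := by
  rw [EuclideanSpace.norm_eq, ← Real.sqrt_sq_eq_abs]
  apply Real.sqrt_le_sqrt
  calc (x i)^2 = ‖x i‖^2 := by rw [Real.norm_eq_abs, sq_abs]
    _ ≤ ∑ j, ‖x j‖^2 := Finset.single_le_sum (f := fun j => ‖x j‖^2) (fun j _ => sq_nonneg _) (Finset.mem_univ i)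

lemma euc_norm_le_of_coords {ι : Type*} [Fintype ι] (x : EuclideanSpace ℝ ι) {R : ℝ}
    (hR : 0 ≤ R) (h : ∀ i, |x i| ≤ R) :
    ‖x‖ ≤ Real.sqrt (Fintype.card ι) * R := by
  rw [EuclideanSpace.norm_eq]
  have h1 : ∑ i, ‖x i‖^2 ≤ (Fintype.card ι : ℝ) * R^2 := by
    calc ∑ i, ‖x i‖^2 ≤ ∑ _i : ι, R^2 := by
          apply Finset.sum_le_sum
          intro i _
          rw [Real.norm_eq_abs]
          exact pow_le_pow_left₀ (abs_nonneg _) (h i) 2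
      _ = (Fintype.card ι : ℝ) * R^2 := by
          rw [Finset.sum_const, Finset.card_univ, nsmul_eq_mul]
  calc Real.sqrt (∑ i, ‖x i‖^2) ≤ Real.sqrt ((Fintype.card ι : ℝ) * R^2) := Real.sqrt_le_sqrt h1
    _ = Real.sqrt (Fintype.card ι) * R := by
        rw [Real.sqrt_mul (Nat.cast_nonneg _), Real.sqrt_sq hR]

lemma ball1_coord {d : ℕ} {R : ℝ} {x : Euc d} (hx : x ∈ Ball1 d R) (i : Fin d) :
    0 ≤ x i ∧ x i ≤ R := by
  refine ⟨hx.1 i, ?_⟩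
  calc x i ≤ ∑ j, x j := Finset.single_le_sum (fun j _ => hx.1 j) (Finset.mem_univ i)
    _ ≤ R := hx.2

lemma ball1_sum_nonneg {d : ℕ} {R : ℝ} {x : Euc d} (hx : x ∈ Ball1 d R) :
    0 ≤ ∑ i, x i := Finset.sum_nonneg (fun i _ => hx.1 i)

lemma isClosed_ball1 (d : ℕ) (R : ℝ) : IsClosed (Ball1 d R) := by
  have h1 : IsClosed (Od d) := by
    have : Od d = ⋂ i, {x : Euc d | 0 ≤ x i} := by
      ext x; simp [Od, Set.mem_iInter]
    rw [this]
    exact isClosed_iInter (fun i => isClosed_le continuous_const (EuclideanSpace.proj i).continuous)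
  have h2 : IsClosed {x : Euc d | ∑ i, x i ≤ R} :=
    isClosed_le (by exact continuous_finset_sum _ (fun i _ => (EuclideanSpace.proj i).continuous))
      continuous_const
  exact h1.inter h2

lemma isCompact_ball1 (d : ℕ) {R : ℝ} (hR : 0 ≤ R) : IsCompact (Ball1 d R) := by
  apply IsCompact.of_isClosed_subset (isCompact_closedBall (0 : Euc d) (Real.sqrt d * R))
    (isClosed_ball1 d R)
  intro x hx
  rw [Metric.mem_closedBall, dist_zero_right]
  simpa using euc_norm_le_of_coords x hR (fun i => by
    rw [abs_of_nonneg (hx.1 i)]; exact (ball1_coord hx i).2)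

abbrev E2 (d : ℕ) := EuclideanSpace ℝ (Fin d ⊕ Fin d)

def pi1 {d : ℕ} (z : E2 d) : Euc d := WithLp.toLp 2 (fun i => z (Sum.inl i))
def pi2 {d : ℕ} (z : E2 d) : Euc d := WithLp.toLp 2 (fun i => z (Sum.inr i))
def glue {d : ℕ} (x y : Euc d) : E2 d := WithLp.toLp 2 (Sum.elim x y)

@[simp] lemma pi1_glue {d : ℕ} (x y : Euc d) : pi1 (glue x y) = x := rfl
@[simp] lemma pi2_glue {d : ℕ} (x y : Euc d) : pi2 (glue x y) = y := rfl

lemma glue_pi {d : ℕ} (z : E2 d) : glue (pi1 z) (pi2 z) = z :=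
  PiLp.ext fun j => by cases j <;> rfl

lemma inner_split {d : ℕ} (c z : E2 d) :
    ⟪c, z⟫ = ⟪pi1 c, pi1 z⟫ + ⟪pi2 c, pi2 z⟫ := by
  rw [einner, einner, einner, Fintype.sum_sum_type]; rfl

lemma sum_split {d : ℕ} (z : E2 d) :
    ∑ j, z j = (∑ i, pi1 z i) + ∑ i, pi2 z i := by
  rw [Fintype.sum_sum_type]; rfl

lemma continuous_pi1 {d : ℕ} : Continuous (pi1 (d := d)) := by
  have h : Continuous fun (z : E2 d) => ((fun i => z (Sum.inl i)) : Fin d → ℝ) :=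
    continuous_pi (fun i => (EuclideanSpace.proj (Sum.inl i : Fin d ⊕ Fin d)).continuous)
  exact (PiLp.continuous_toLp (p := 2) (β := fun _ : Fin d => ℝ)).comp h

lemma continuous_pi2 {d : ℕ} : Continuous (pi2 (d := d)) := by
  have h : Continuous fun (z : E2 d) => ((fun i => z (Sum.inr i)) : Fin d → ℝ) :=
    continuous_pi (fun i => (EuclideanSpace.proj (Sum.inr i : Fin d ⊕ Fin d)).continuous)
  exact (PiLp.continuous_toLp (p := 2) (β := fun _ : Fin d => ℝ)).comp h

def oneV (d : ℕ) : Euc d := WithLp.toLp 2 (fun _ => 1)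

lemma inner_oneV {d : ℕ} (x : Euc d) : ⟪oneV d, x⟫ = ∑ i, x i := by
  rw [einner]; simp [oneV]

lemma norm_oneV (d : ℕ) : ‖oneV d‖ = Real.sqrt d := by
  rw [EuclideanSpace.norm_eq]
  simp [oneV]

lemma norm_pi1_le {d : ℕ} (z : E2 d) : ‖pi1 z‖ ≤ ‖z‖ := by
  rw [EuclideanSpace.norm_eq, EuclideanSpace.norm_eq]
  apply Real.sqrt_le_sqrt
  rw [Fintype.sum_sum_type]
  have : ∑ i : Fin d, ‖pi1 z i‖^2 = ∑ i : Fin d, ‖z (Sum.inl i)‖^2 := rfl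
  rw [this]
  exact le_add_of_nonneg_right (Finset.sum_nonneg fun i _ => sq_nonneg _)

lemma norm_pi2_le {d : ℕ} (z : E2 d) : ‖pi2 z‖ ≤ ‖z‖ := by
  rw [EuclideanSpace.norm_eq, EuclideanSpace.norm_eq]
  apply Real.sqrt_le_sqrt
  rw [Fintype.sum_sum_type]
  have : ∑ i : Fin d, ‖pi2 z i‖^2 = ∑ i : Fin d, ‖z (Sum.inr i)‖^2 := rfl
  rw [this]
  exact le_add_of_nonneg_left (Finset.sum_nonneg fun i _ => sq_nonneg _)

lemma isCompact_C2 {d : ℕ} {R : ℝ} (hR : 0 ≤ R) :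
    IsCompact {z : E2 d | pi1 z ∈ Ball1 d R ∧ pi2 z ∈ Ball1 d R} := by
  apply IsCompact.of_isClosed_subset
    (isCompact_closedBall (0 : E2 d) (Real.sqrt (Fintype.card (Fin d ⊕ Fin d)) * R))
  · apply IsClosed.inter
    · exact (isClosed_ball1 d R).preimage continuous_pi1
    · exact (isClosed_ball1 d R).preimage continuous_pi2
  · intro z hz
    rw [Metric.mem_closedBall, dist_zero_right]
    apply euc_norm_le_of_coords z hR
    intro j
    cases j with
    | inl i => rw [show z (Sum.inl i) = pi1 z i from rfl, abs_of_nonneg (hz.1.1 i)]; exact (ball1_coord hz.1 i).2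
    | inr i => rw [show z (Sum.inr i) = pi2 z i from rfl, abs_of_nonneg (hz.2.1 i)]; exact (ball1_coord hz.2 i).2

lemma key_nonneg
    (d : ℕ) (F G : Euc d → Euc d → Euc d)
    (hFc : Continuous fun q : Euc d × Euc d => F q.1 q.2)
    (r lam : ℝ) (hr : 0 < r) (hlam : 0 ≤ lam) (T : Euc d →L[ℝ] Euc d)
    (R₀ : ℝ) (hR₀ : 0 < R₀)
    (hyp2T : ∀ R ≥ R₀, ∀ x ∈ Ball1 d R, T x ∈ Ball1 d R)
    (hyp3 : ∀ x ∈ Od d, ∀ y ∈ Od d, ∀ p q : Euc d,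
      0 ≤ ⟪G x p - G y q, x - y⟫ + ⟪F x p - F y q, p - q⟫)
    (U V : Euc d → Euc d)
    (hU : IsMonotoneSolOS d F G r lam T R₀ U)
    (hV : IsMonotoneSolOS d F G r lam T R₀ V) :
    ∀ x ∈ Od d, ∀ y ∈ Od d, 0 ≤ ⟪U x - V y, x - y⟫ := by
  classical
  obtain ⟨hUc, hUneg, R₁U, hRU0, hUsol⟩ := hU
  obtain ⟨hVc, hVneg, R₁V, hRV0, hVsol⟩ := hV
  intro x hx y hy
  set R := max (max R₁U R₁V) (max (∑ i, x i) (∑ i, y i)) with hRdef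
  have hRU : R₁U ≤ R := le_trans (le_max_left _ _) (le_max_left _ _)
  have hRV : R₁V ≤ R := le_trans (le_max_right _ _) (le_max_left _ _)
  have hR0 : R₀ ≤ R := le_trans hRU0 hRU
  have hRpos : 0 < R := lt_of_lt_of_le hR₀ hR0
  have hxB : x ∈ Ball1 d R := ⟨hx, le_trans (le_max_left _ _) (le_max_right _ _)⟩
  have hyB : y ∈ Ball1 d R := ⟨hy, le_trans (le_max_right _ _) (le_max_right _ _)⟩
  set C2 : Set (E2 d) := {z | pi1 z ∈ Ball1 d R ∧ pi2 z ∈ Ball1 d R} with hC2def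
  have hC2c : IsCompact C2 := isCompact_C2 hRpos.le
  have hC2ne : C2.Nonempty := ⟨glue x y, by simp [hC2def, hxB, hyB]⟩
  set Φ : E2 d → ℝ := fun z => ⟪U (pi1 z) - V (pi2 z), pi1 z - pi2 z⟫ with hΦdef
  have hKOd : Ball1 d R ⊆ Od d := fun a ha => ha.1
  have hUK : ContinuousOn U (Ball1 d R) := hUc.mono hKOd
  have hVK : ContinuousOn V (Ball1 d R) := hVc.mono hKOd
  have hΦc : ContinuousOn Φ C2 := by
    apply ContinuousOn.inner
    · apply ContinuousOn.sub
      · exact hUK.comp continuous_pi1.continuousOn (fun z hz => hz.1)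
      · exact hVK.comp continuous_pi2.continuousOn (fun z hz => hz.2)
    · exact (continuous_pi1.sub continuous_pi2).continuousOn
  obtain ⟨p, hpC, hpmin⟩ := hC2c.exists_isMinOn hC2ne hΦc
  set m := Φ p with hm
  obtain ⟨Mz0, hMz0⟩ := hC2c.isBounded.exists_norm_le
  set Mz := max Mz0 0 with hMzdef
  have hMz : ∀ z ∈ C2, ‖z‖ ≤ Mz := fun z hz => (hMz0 z hz).trans (le_max_left _ _)
  have hMznn : 0 ≤ Mz := le_max_right _ _
  have hFUcont : ContinuousOn (fun a : Euc d => F a (U a)) (Ball1 d R) :=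
    hFc.comp_continuousOn (f := fun a => (a, U a)) (continuousOn_id.prodMk hUK)
  have hFVcont : ContinuousOn (fun a : Euc d => F a (V a)) (Ball1 d R) :=
    hFc.comp_continuousOn (f := fun a => (a, V a)) (continuousOn_id.prodMk hVK)
  obtain ⟨CF1, hCF1⟩ := (isCompact_ball1 d hRpos.le).exists_bound_of_continuousOn hFUcont
  obtain ⟨CF2, hCF2⟩ := (isCompact_ball1 d hRpos.le).exists_bound_of_continuousOn hFVcont
  set CF := max (max CF1 CF2) 0 with hCFdef
  have hCFnn : 0 ≤ CF := le_max_right _ _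
  have hCF1' : ∀ a ∈ Ball1 d R, ‖F a (U a)‖ ≤ CF :=
    fun a ha => (hCF1 a ha).trans (le_trans (le_max_left _ _) (le_max_left _ _))
  have hCF2' : ∀ a ∈ Ball1 d R, ‖F a (V a)‖ ≤ CF :=
    fun a ha => (hCF2 a ha).trans (le_trans (le_max_right _ _) (le_max_left _ _))
  set Sd : ℝ := Real.sqrt d with hSddef
  have hSdnn : 0 ≤ Sd := Real.sqrt_nonneg _
  set K1 : ℝ := 2*R + 2*Mz with hK1def
  have hK1nn : 0 ≤ K1 := by positivity
  set Ctot : ℝ := r*K1 + lam*K1 + 2*CF*(Sd+1) + 1 with hCtotdef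
  have hCtot : 0 < Ctot := by positivity
  clear_value Mz CF Sd K1 Ctot
  have key : ∀ δ : ℝ, 0 < δ → 0 ≤ r * m + Ctot * δ := by
    intro δ hδ
    have hfc : ContinuousOn (fun z : E2 d => Φ z + δ * ∑ j, z j) C2 :=
      hΦc.add ((continuous_const.mul
        (continuous_finset_sum _ fun j _ => (EuclideanSpace.proj j).continuous)).continuousOn)
    obtain ⟨c, hcnorm, z₀, hz₀C, hstrict⟩ := stegall C2 hC2c hC2ne _ hfc hδ
    set x₀ := pi1 z₀ with hx₀def
    set y₀ := pi2 z₀ with hy₀def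
    set c₁ := pi1 c with hc₁def
    set c₂ := pi2 c with hc₂def
    have hx₀K : x₀ ∈ Ball1 d R := hz₀C.1
    have hy₀K : y₀ ∈ Ball1 d R := hz₀C.2
    have habs1 : ∀ i, |c₁ i| ≤ ‖c‖ := fun i => euc_abs_le_norm c (Sum.inl i)
    have habs2 : ∀ i, |c₂ i| ≤ ‖c‖ := fun i => euc_abs_le_norm c (Sum.inr i)
    -- U side
    set V' : Euc d := V y₀ - δ • oneV d - c₁ with hV'def
    have hV'app : ∀ i, V' i = V y₀ i - δ - c₁ i := by
      intro i
      simp [hV'def, oneV, PiLp.sub_apply, PiLp.smul_apply, smul_eq_mul]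
    have hV'neg : ∀ i, V' i ≤ 0 := by
      intro i
      rw [hV'app i]
      have h1 := hVneg y₀ hy₀K.1 i
      have h2 := (abs_le.1 ((habs1 i).trans hcnorm.le)).1
      linarith
    have expandU : ∀ a : Euc d, ⟪U a - V', a - y₀⟫
        = ⟪U a - V y₀, a - y₀⟫ + (δ * ∑ i, a i + ⟪c₁, a⟫) - (δ * ∑ i, y₀ i + ⟪c₁, y₀⟫) := by
      intro a
      have h1 : U a - V' = (U a - V y₀) + (δ • oneV d + c₁) := by rw [hV'def]; abel
      simp only [h1, inner_add_left, inner_sub_right, real_inner_smul_left, inner_oneV]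
      ring
    have hUstrict : ∀ a ∈ Ball1 d R, a ≠ x₀ → ⟪U x₀ - V', x₀ - y₀⟫ < ⟪U a - V', a - y₀⟫ := by
      intro a haK hane
      have hzC : glue a y₀ ∈ C2 := by
        constructor
        · rw [pi1_glue]; exact haK
        · rw [pi2_glue]; exact hy₀K
      have hzne : glue a y₀ ≠ z₀ := by
        intro he; apply hane
        have h := congrArg pi1 he
        rwa [pi1_glue] at h
      have h := hstrict _ hzC hzne
      rw [expandU a, expandU x₀]
      have e1 : Φ (glue a y₀) = ⟪U a - V y₀, a - y₀⟫ := by rw [hΦdef]; simp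
      have e2 : Φ z₀ = ⟪U x₀ - V y₀, x₀ - y₀⟫ := rfl
      have e3 : ∑ j, glue a y₀ j = (∑ i, a i) + ∑ i, y₀ i := by rw [sum_split]; simp
      have e4 : ∑ j, z₀ j = (∑ i, x₀ i) + ∑ i, y₀ i := sum_split z₀
      have e5 : ⟪c, glue a y₀⟫ = ⟪c₁, a⟫ + ⟪c₂, y₀⟫ := by rw [inner_split]; simp [hc₁def, hc₂def]
      have e6 : ⟪c, z₀⟫ = ⟪c₁, x₀⟫ + ⟪c₂, y₀⟫ := inner_split c z₀
      rw [e1, e2, e3, e4, e5, e6] at h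
      linarith
    have ineqU := hUsol R hRU V' hV'neg y₀ hy₀K.1 x₀ hx₀K hUstrict
    -- V side
    set U' : Euc d := U x₀ - δ • oneV d - c₂ with hU'def
    have hU'app : ∀ i, U' i = U x₀ i - δ - c₂ i := by
      intro i
      simp [hU'def, oneV, PiLp.sub_apply, PiLp.smul_apply, smul_eq_mul]
    have hU'neg : ∀ i, U' i ≤ 0 := by
      intro i
      rw [hU'app i]
      have h1 := hUneg x₀ hx₀K.1 i
      have h2 := (abs_le.1 ((habs2 i).trans hcnorm.le)).1
      linarith
    have expandV : ∀ b : Euc d, ⟪V b - U', b - x₀⟫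
        = ⟪V b - U x₀, b - x₀⟫ + (δ * ∑ i, b i + ⟪c₂, b⟫) - (δ * ∑ i, x₀ i + ⟪c₂, x₀⟫) := by
      intro b
      have h1 : V b - U' = (V b - U x₀) + (δ • oneV d + c₂) := by rw [hU'def]; abel
      simp only [h1, inner_add_left, inner_sub_right, real_inner_smul_left, inner_oneV]
      ring
    have flipΦ : ∀ a b : Euc d, ⟪V b - U a, b - a⟫ = ⟪U a - V b, a - b⟫ := by
      intro a b
      rw [show V b - U a = -(U a - V b) by abel, show b - a = -(a - b) by abel, inner_neg_neg]
    have hVstrict : ∀ b ∈ Ball1 d R, b ≠ y₀ → ⟪V y₀ - U', y₀ - x₀⟫ < ⟪V b - U', b - x₀⟫ := by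
      intro b hbK hbne
      have hzC : glue x₀ b ∈ C2 := by
        constructor
        · rw [pi1_glue]; exact hx₀K
        · rw [pi2_glue]; exact hbK
      have hzne : glue x₀ b ≠ z₀ := by
        intro he; apply hbne
        have h := congrArg pi2 he
        rwa [pi2_glue] at h
      have h := hstrict _ hzC hzne
      rw [expandV b, expandV y₀, flipΦ x₀ b, flipΦ x₀ y₀]
      have e1 : Φ (glue x₀ b) = ⟪U x₀ - V b, x₀ - b⟫ := by rw [hΦdef]; simp
      have e2 : Φ z₀ = ⟪U x₀ - V y₀, x₀ - y₀⟫ := rfl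
      have e3 : ∑ j, glue x₀ b j = (∑ i, x₀ i) + ∑ i, b i := by rw [sum_split]; simp
      have e4 : ∑ j, z₀ j = (∑ i, x₀ i) + ∑ i, y₀ i := sum_split z₀
      have e5 : ⟪c, glue x₀ b⟫ = ⟪c₁, x₀⟫ + ⟪c₂, b⟫ := by rw [inner_split]; simp [hc₁def, hc₂def]
      have e6 : ⟪c, z₀⟫ = ⟪c₁, x₀⟫ + ⟪c₂, y₀⟫ := inner_split c z₀
      rw [e1, e2, e3, e4, e5, e6] at h
      linarith
    have ineqV := hVsol R hRV U' hU'neg x₀ hx₀K.1 y₀ hy₀K hVstrict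
    -- combine
    have hmono := hyp3 x₀ hx₀K.1 y₀ hy₀K.1 (U x₀) (V y₀)
    have hmono' : 0 ≤ (⟪G x₀ (U x₀), x₀ - y₀⟫ + ⟪F x₀ (U x₀), U x₀ - V y₀⟫)
                + (⟪G y₀ (V y₀), y₀ - x₀⟫ + ⟪F y₀ (V y₀), V y₀ - U x₀⟫) := by
      have e1 : ⟪G x₀ (U x₀) - G y₀ (V y₀), x₀ - y₀⟫
          = ⟪G x₀ (U x₀), x₀ - y₀⟫ + ⟪G y₀ (V y₀), y₀ - x₀⟫ := by
        rw [inner_sub_left, show (y₀ - x₀ : Euc d) = -(x₀ - y₀) by abel, inner_neg_right]; ring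
      have e2 : ⟪F x₀ (U x₀) - F y₀ (V y₀), U x₀ - V y₀⟫
          = ⟪F x₀ (U x₀), U x₀ - V y₀⟫ + ⟪F y₀ (V y₀), V y₀ - U x₀⟫ := by
        rw [inner_sub_left, show (V y₀ - U x₀ : Euc d) = -(U x₀ - V y₀) by abel, inner_neg_right]
        ring
      rw [e1, e2] at hmono
      linarith
    -- expansions of F-terms
    have eFU : ⟪F x₀ (U x₀), U x₀ - V'⟫
        = ⟪F x₀ (U x₀), U x₀ - V y₀⟫ + ⟪F x₀ (U x₀), δ • oneV d + c₁⟫ := by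
      rw [show U x₀ - V' = (U x₀ - V y₀) + (δ • oneV d + c₁) by rw [hV'def]; abel, inner_add_right]
    have eFV : ⟪F y₀ (V y₀), V y₀ - U'⟫
        = ⟪F y₀ (V y₀), V y₀ - U x₀⟫ + ⟪F y₀ (V y₀), δ • oneV d + c₂⟫ := by
      rw [show V y₀ - U' = (V y₀ - U x₀) + (δ • oneV d + c₂) by rw [hU'def]; abel, inner_add_right]
    have hpertnorm : ∀ cc : Euc d, ‖cc‖ ≤ ‖c‖ → ‖δ • oneV d + cc‖ ≤ δ * (Sd + 1) := by
      intro cc hcc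
      calc ‖δ • oneV d + cc‖ ≤ ‖δ • oneV d‖ + ‖cc‖ := norm_add_le _ _
        _ = |δ| * Sd + ‖cc‖ := by rw [norm_smul, Real.norm_eq_abs, norm_oneV, hSddef]
        _ ≤ δ * Sd + δ := by rw [abs_of_pos hδ]; linarith [hcc.trans hcnorm.le]
        _ = δ * (Sd + 1) := by ring
    have herr1 : |⟪F x₀ (U x₀), δ • oneV d + c₁⟫| ≤ CF * (δ * (Sd + 1)) := by
      calc |⟪F x₀ (U x₀), δ • oneV d + c₁⟫| ≤ ‖F x₀ (U x₀)‖ * ‖δ • oneV d + c₁‖ :=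
            abs_real_inner_le_norm _ _
        _ ≤ CF * (δ * (Sd + 1)) :=
            mul_le_mul (hCF1' x₀ hx₀K) (hpertnorm c₁ (norm_pi1_le c)) (norm_nonneg _) hCFnn
    have herr2 : |⟪F y₀ (V y₀), δ • oneV d + c₂⟫| ≤ CF * (δ * (Sd + 1)) := by
      calc |⟪F y₀ (V y₀), δ • oneV d + c₂⟫| ≤ ‖F y₀ (V y₀)‖ * ‖δ • oneV d + c₂‖ :=
            abs_real_inner_le_norm _ _
        _ ≤ CF * (δ * (Sd + 1)) :=
            mul_le_mul (hCF2' y₀ hy₀K) (hpertnorm c₂ (norm_pi2_le c)) (norm_nonneg _) hCFnn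
    have hadjU : ⟪ContinuousLinearMap.adjoint T (U (T x₀)), x₀ - y₀⟫
        = ⟪U (T x₀), T x₀ - T y₀⟫ := by
      rw [ContinuousLinearMap.adjoint_inner_left, map_sub]
    have hadjV : ⟪ContinuousLinearMap.adjoint T (V (T y₀)), y₀ - x₀⟫
        = ⟪V (T y₀), T y₀ - T x₀⟫ := by
      rw [ContinuousLinearMap.adjoint_inner_left, map_sub]
    set ΦT : ℝ := ⟪U (T x₀) - V (T y₀), T x₀ - T y₀⟫ with hΦTdef
    have hTz : glue (T x₀) (T y₀) ∈ C2 := by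
      constructor
      · rw [pi1_glue]; exact hyp2T R hR0 x₀ hx₀K
      · rw [pi2_glue]; exact hyp2T R hR0 y₀ hy₀K
    have hTm : m ≤ ΦT := by
      have h := (isMinOn_iff.1 hpmin) _ hTz
      have e : Φ (glue (T x₀) (T y₀)) = ΦT := by rw [hΦTdef, hΦdef]; simp
      rw [e] at h; exact h
    have hΦ₀ge : m ≤ Φ z₀ := (isMinOn_iff.1 hpmin) _ hz₀C
    have hsum2 : ∀ z ∈ C2, 0 ≤ ∑ j, z j ∧ ∑ j, z j ≤ 2 * R := by
      intro z hz
      rw [sum_split]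
      constructor
      · have h1 := ball1_sum_nonneg hz.1; have h2 := ball1_sum_nonneg hz.2; linarith
      · have h1 := hz.1.2; have h2 := hz.2.2; linarith
    have hΦ₀le : Φ z₀ ≤ m + K1 * δ := by
      have hK1δ : 0 ≤ K1 * δ := mul_nonneg hK1nn hδ.le
      by_cases hpz : p = z₀
      · rw [hm, hpz]; linarith
      · have h := hstrict p hpC hpz
        have b1 : |⟪c, z₀⟫| ≤ δ * Mz := by
          calc |⟪c, z₀⟫| ≤ ‖c‖ * ‖z₀‖ := abs_real_inner_le_norm _ _
            _ ≤ δ * Mz := mul_le_mul hcnorm.le (hMz z₀ hz₀C) (norm_nonneg _) hδ.le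
        have b2 : |⟪c, p⟫| ≤ δ * Mz := by
          calc |⟪c, p⟫| ≤ ‖c‖ * ‖p‖ := abs_real_inner_le_norm _ _
            _ ≤ δ * Mz := mul_le_mul hcnorm.le (hMz p hpC) (norm_nonneg _) hδ.le
        obtain ⟨s1a, s1b⟩ := hsum2 z₀ hz₀C
        obtain ⟨s2a, s2b⟩ := hsum2 p hpC
        have a1 := abs_le.1 b1
        have a2 := abs_le.1 b2
        have p1 : 0 ≤ δ * ∑ j, z₀ j := mul_nonneg hδ.le s1a
        have p2 : δ * ∑ j, p j ≤ δ * (2 * R) := mul_le_mul_of_nonneg_left s2b hδ.le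
        have hK1e : K1 * δ = δ * (2 * R) + δ * Mz + δ * Mz := by rw [hK1def]; ring
        linarith
    have hABU : ⟪U x₀ - ContinuousLinearMap.adjoint T (U (T x₀)), x₀ - y₀⟫
        = ⟪U x₀, x₀ - y₀⟫ - ⟪U (T x₀), T x₀ - T y₀⟫ := by rw [inner_sub_left, hadjU]
    have hABV : ⟪V y₀ - ContinuousLinearMap.adjoint T (V (T y₀)), y₀ - x₀⟫
        = ⟪V y₀, y₀ - x₀⟫ - ⟪V (T y₀), T y₀ - T x₀⟫ := by rw [inner_sub_left, hadjV]
    have hUV : ⟪U x₀, x₀ - y₀⟫ + ⟪V y₀, y₀ - x₀⟫ = Φ z₀ := by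
      have e : Φ z₀ = ⟪U x₀ - V y₀, x₀ - y₀⟫ := rfl
      rw [e, inner_sub_left, show (y₀ - x₀ : Euc d) = -(x₀ - y₀) by abel, inner_neg_right]; ring
    have hTUV : ⟪U (T x₀), T x₀ - T y₀⟫ + ⟪V (T y₀), T y₀ - T x₀⟫ = ΦT := by
      rw [hΦTdef, inner_sub_left,
        show (T y₀ - T x₀ : Euc d) = -(T x₀ - T y₀) by abel, inner_neg_right]
      ring
    have hprod1 : r * Φ z₀ ≤ r * (m + K1 * δ) := mul_le_mul_of_nonneg_left hΦ₀le hr.le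
    have hprod2 : lam * (Φ z₀ - ΦT) ≤ lam * (K1 * δ) := by
      apply mul_le_mul_of_nonneg_left _ hlam; linarith
    have e1 := (abs_le.1 herr1).1
    have e2 := (abs_le.1 herr2).1
    rw [eFU, hABU] at ineqU
    rw [eFV, hABV] at ineqV
    have hsumRHS : r * ⟪U x₀, x₀ - y₀⟫
          + lam * (⟪U x₀, x₀ - y₀⟫ - ⟪U (T x₀), T x₀ - T y₀⟫)
          + (r * ⟪V y₀, y₀ - x₀⟫
          + lam * (⟪V y₀, y₀ - x₀⟫ - ⟪V (T y₀), T y₀ - T x₀⟫))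
        = r * Φ z₀ + lam * (Φ z₀ - ΦT) := by
      rw [← hUV, ← hTUV]; ring
    have hexp1 : r * (m + K1 * δ) = r * m + r * K1 * δ := by ring
    have hexp2 : lam * (K1 * δ) = lam * K1 * δ := by ring
    have hexp3 : Ctot * δ = r * K1 * δ + lam * K1 * δ + 2 * CF * (Sd + 1) * δ + δ := by
      rw [hCtotdef]; ring
    have hexp4 : CF * (δ * (Sd + 1)) + CF * (δ * (Sd + 1)) = 2 * CF * (Sd + 1) * δ := by ring
    linarith [hmono', ineqU, ineqV, hsumRHS, hprod1, hprod2, e1, e2, hexp1, hexp2, hexp3,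
      hexp4, hδ.le]
  have hm0 : 0 ≤ m := by
    by_contra hneg
    push_neg at hneg
    have hrm : r * m < 0 := mul_neg_of_pos_of_neg hr hneg
    have hδp : 0 < -(r * m) / (2 * Ctot) := div_pos (by linarith) (by linarith)
    have hk := key _ hδp
    have he : Ctot * (-(r * m) / (2 * Ctot)) = -(r * m) / 2 := by
      have hC0 : Ctot ≠ 0 := ne_of_gt hCtot
      field_simp
    rw [he] at hk
    linarith
  have hgxy : glue x y ∈ C2 := by
    constructor
    · rw [pi1_glue]; exact hxB
    · rw [pi2_glue]; exact hyB
  have h := (isMinOn_iff.1 hpmin) _ hgxy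
  have e : Φ (glue x y) = ⟪U x - V y, x - y⟫ := by rw [hΦdef]; simp
  rw [e] at h
  linarith

/-- Theorem 3.2: under Hypotheses 1-3, there is at most one monotone solution of the MFG of
optimal stopping. -/
theorem uniqueness_monotone_optimal_stopping
    (d : ℕ) (hd : 1 ≤ d)
    (F G : Euc d → Euc d → Euc d)
    (hFc : Continuous fun q : Euc d × Euc d => F q.1 q.2)
    (hGc : Continuous fun q : Euc d × Euc d => G q.1 q.2)
    (r lam : ℝ) (hr : 0 < r) (hlam : 0 ≤ lam) (T : Euc d →L[ℝ] Euc d)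
    -- Hypothesis 1
    (hyp1F : ∀ x ∈ Od d, ∀ p : Euc d, ∀ i, x i = 0 → F x p i ≤ 0)
    (hyp1T : ∀ x ∈ Od d, T x ∈ Od d)
    -- Hypothesis 2
    (R₀ : ℝ) (hR₀ : 0 < R₀)
    (hyp2F : ∀ x ∈ Od d, ∀ p : Euc d, R₀ ≤ ∑ i, x i → 0 ≤ ∑ i, F x p i)
    (hyp2T : ∀ R ≥ R₀, ∀ x ∈ Ball1 d R, T x ∈ Ball1 d R)
    -- Hypothesis 3
    (hyp3 : ∀ x ∈ Od d, ∀ y ∈ Od d, ∀ p q : Euc d,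
      0 ≤ ⟪G x p - G y q, x - y⟫ + ⟪F x p - F y q, p - q⟫)
    (U V : Euc d → Euc d)
    (hU : IsMonotoneSolOS d F G r lam T R₀ U)
    (hV : IsMonotoneSolOS d F G r lam T R₀ V) :
    ∀ x ∈ Od d, U x = V x := by
  intro x hx
  have h1 := key_nonneg d F G hFc r lam hr hlam T R₀ hR₀ hyp2T hyp3 U V hU hV
  have h2 := key_nonneg d F G hFc r lam hr hlam T R₀ hR₀ hyp2T hyp3 V U hV hU
  have hUc := hU.1
  have hVc := hV.1
  have limarg : ∀ (A B : Euc d → Euc d), ContinuousOn B (Od d) →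
      (∀ a ∈ Od d, ∀ b ∈ Od d, 0 ≤ ⟪A a - B b, a - b⟫) → ∀ i, A x i ≤ B x i := by
    intro A B hBc hkey i
    set e : Euc d := EuclideanSpace.single i (1:ℝ) with hedef
    have henn : ∀ j, 0 ≤ e j := by
      intro j
      rw [hedef, EuclideanSpace.single_apply]
      split_ifs <;> norm_num
    have hyn : ∀ n : ℕ, x + ((n:ℝ)+1)⁻¹ • e ∈ Od d := by
      intro n j
      have happ : (x + ((n:ℝ)+1)⁻¹ • e) j = x j + ((n:ℝ)+1)⁻¹ * e j := by
        simp [PiLp.add_apply, PiLp.smul_apply, smul_eq_mul]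
      rw [happ]
      have h0 := henn j
      have hxj := hx j
      have hpos : (0:ℝ) ≤ ((n:ℝ)+1)⁻¹ := by positivity
      have := mul_nonneg hpos h0
      linarith
    have hineq : ∀ n : ℕ, A x i ≤ B (x + ((n:ℝ)+1)⁻¹ • e) i := by
      intro n
      set t : ℝ := ((n:ℝ)+1)⁻¹ with htdef
      have ht : 0 < t := by rw [htdef]; positivity
      have h := hkey x hx _ (hyn n)
      have e1 : x - (x + t • e) = -(t • e) := by abel
      rw [e1, inner_neg_right] at h
      have e2 : ⟪A x - B (x + t • e), t • e⟫ = t * (A x i - B (x + t • e) i) := by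
        rw [real_inner_smul_right, einner]
        congr 1
        have : ∀ j, (A x - B (x + t • e)) j * e j
            = (if j = i then A x j - B (x + t • e) j else 0) := by
          intro j
          rw [hedef, EuclideanSpace.single_apply]
          split_ifs with hji
          · simp [PiLp.sub_apply]
          · simp
        rw [Finset.sum_congr rfl (fun j _ => this j), Finset.sum_ite_eq' Finset.univ i
          (fun j => A x j - B (x + t • e) j)]
        simp
      rw [e2] at h
      nlinarith
    have h0 : Filter.Tendsto (fun n : ℕ => ((n:ℝ)+1)⁻¹) Filter.atTop (nhds 0) := by
      have := tendsto_one_div_add_atTop_nhds_zero_nat (𝕜 := ℝ)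
      simpa [one_div] using this
    have hy_tendsto : Filter.Tendsto (fun n : ℕ => x + ((n:ℝ)+1)⁻¹ • e)
        Filter.atTop (nhds x) := by
      have h1' : Filter.Tendsto (fun n : ℕ => x + ((n:ℝ)+1)⁻¹ • e)
          Filter.atTop (nhds (x + (0:ℝ) • e)) :=
        Filter.Tendsto.const_add x (h0.smul_const e)
      simpa using h1'
    have hB_tendsto : Filter.Tendsto (fun n : ℕ => B (x + ((n:ℝ)+1)⁻¹ • e) i)
        Filter.atTop (nhds (B x i)) := by
      have hw : Filter.Tendsto (fun n : ℕ => x + ((n:ℝ)+1)⁻¹ • e)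
          Filter.atTop (nhdsWithin x (Od d)) :=
        tendsto_nhdsWithin_of_tendsto_nhds_of_eventually_within _ hy_tendsto
          (Filter.Eventually.of_forall hyn)
      have hB1 : Filter.Tendsto (fun n : ℕ => B (x + ((n:ℝ)+1)⁻¹ • e))
          Filter.atTop (nhds (B x)) := (hBc x hx).tendsto.comp hw
      exact ((EuclideanSpace.proj i).continuous.tendsto (B x)).comp hB1
    exact ge_of_tendsto hB_tendsto (Filter.Eventually.of_forall hineq)
  refine PiLp.ext fun i => ?_
  exact le_antisymm (limarg U V hVc h1 i) (limarg V U hUc h2 i)
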